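/- Let A be the adjacency matrix of a DSRG with parameters (n,k,t,λ,μ) respecting a homogeneous partition π with a cells of size b (ab = n), and suppose the π-join M₁(A) is a DSRG. Then for all i,l ∈ {1,…,a}, the number of darts from cell C_i to any fixed vertex v ∈ C_l is independent of v and equals λ+b−k if i = l, and μ if i ≠ l. Equivalently, U_i·A = (λ+b−k)U_i + μ(J − U_i). -/
import Mathlib


open Matrix

/-- The all-ones matrix. -/
def onesMat (n : ℕ) : Matrix (Fin n) (Fin n) ℝ := Matrix.of fun _ _ => 1

/-- The all-ones matrix indexed by blocks. -/
def Jbig (N n : ℕ) : Matrix (Fin N × Fin n) (Fin N × Fin n) ℝ := Matrix.of fun _ _ => 1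

/-- `Ublk a b i`: columns in the `i`-th cell are all-ones, other entries zero. -/
def Ublk (a b : ℕ) (i : ℕ) : Matrix (Fin (a * b)) (Fin (a * b)) ℝ :=
  Matrix.of fun _ c => if (c : ℕ) / b = i then 1 else 0

/-- The π-join of `A` in power `j`: the block-circulant matrix of block order
`j*a+1` whose first block-row is `(A, U₁,…,U₁, U₂,…,U₂, …, U_a,…,U_a)`,
each `Uᵢ` repeated `j` times. -/
def Mjoin (a b j : ℕ) (A : Matrix (Fin (a * b)) (Fin (a * b)) ℝ) :
    Matrix (Fin (j * a + 1) × Fin (a * b)) (Fin (j * a + 1) × Fin (a * b)) ℝ :=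
  fun p q =>
    if q.1 - p.1 = 0 then A p.2 q.2
    else Ublk a b ((((q.1 - p.1 : Fin (j * a + 1)) : ℕ) - 1) / j) p.2 q.2

lemma cell_lt {a b : ℕ} (hb : 0 < b) (c : Fin (a*b)) : (c:ℕ)/b < a :=
  (Nat.div_lt_iff_lt_mul hb).mpr (by simpa [mul_comm] using c.isLt)

lemma cellcard {a b : ℕ} (hb : 0 < b) {i : ℕ} (hi : i < a) :
    (∑ s : Fin (a*b), (if (s:ℕ)/b = i then (1:ℝ) else 0)) = b := by
  rw [Finset.sum_boole]
  have : (Finset.univ.filter (fun s : Fin (a*b) => (s:ℕ)/b = i)).card = (Finset.univ : Finset (Fin b)).card := by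
    refine Finset.card_bij' (fun s _ => (⟨(s:ℕ) % b, Nat.mod_lt _ hb⟩ : Fin b))
      (fun u _ => (⟨i*b + (u:ℕ), by
        have : (u:ℕ) < b := u.isLt
        calc i*b + (u:ℕ) < i*b + b := by omega
        _ = (i+1)*b := by ring
        _ ≤ a*b := Nat.mul_le_mul_right _ (by omega)⟩ : Fin (a*b))) ?_ ?_ ?_ ?_
    · intro s hs
      simp
    · intro u hu
      simp only [Finset.mem_filter, Finset.mem_univ, true_and]
      have : (u:ℕ) < b := u.isLt
      rw [show i*b + (u:ℕ) = (u:ℕ) + b*i by ring, Nat.add_mul_div_left _ _ hb,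
        Nat.div_eq_of_lt this]
      omega
    · intro s hs
      simp only [Finset.mem_filter, Finset.mem_univ, true_and] at hs
      apply Fin.ext
      simp only
      rw [← hs]
      exact Nat.div_add_mod' _ _
    · intro u hu
      apply Fin.ext
      simp only
      have : (u:ℕ) < b := u.isLt
      rw [show i*b + (u:ℕ) = (u:ℕ) + b*i by ring, Nat.add_mul_mod_self_left,
        Nat.mod_eq_of_lt this]
  rw [this]
  simp

lemma Mjoin_app (a b : ℕ) (A : Matrix (Fin (a*b)) (Fin (a*b)) ℝ)
    (p q : Fin (1*a+1)) (r c : Fin (a*b)) :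
    Mjoin a b 1 A (p,r) (q,c)
      = if q = p then A r c
        else (if (c:ℕ)/b = ((q - p : Fin (1*a+1)) : ℕ) - 1 then 1 else 0) := by
  have h : (q - p = 0) ↔ q = p := sub_eq_zero
  simp only [Mjoin, Ublk, Nat.div_one, Matrix.of_apply]
  by_cases hqp : q = p <;> simp [hqp, h]

theorem pijoin_quotient_matrix (a b k t l m : ℕ) (ha : 0 < a) (hb : 0 < b)
    (A : Matrix (Fin (a * b)) (Fin (a * b)) ℝ)
    (h01 : ∀ i j, A i j = 0 ∨ A i j = 1)
    (hdiag : ∀ i, A i i = 0)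
    (hAJ : A * onesMat (a * b) = (k : ℝ) • onesMat (a * b))
    (hJA : onesMat (a * b) * A = (k : ℝ) • onesMat (a * b))
    (hA2 : A * A = (t : ℝ) • (1 : Matrix (Fin (a * b)) (Fin (a * b)) ℝ) + (l : ℝ) • A
            + (m : ℝ) • (onesMat (a * b) - 1 - A))
    (hlt : l < t) (htk : t < k) (hm0 : 0 < m) (hmt : m ≤ t)
    (ntil ktil ttil ltil mtil : ℕ)
    (hcard : ntil = Fintype.card (Fin (1 * a + 1) × Fin (a * b)))
    (hMJ : Mjoin a b 1 A * Jbig (1 * a + 1) (a * b)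
            = (ktil : ℝ) • Jbig (1 * a + 1) (a * b))
    (hJM : Jbig (1 * a + 1) (a * b) * Mjoin a b 1 A
            = (ktil : ℝ) • Jbig (1 * a + 1) (a * b))
    (hM2 : Mjoin a b 1 A * Mjoin a b 1 A
            = (ttil : ℝ) • (1 : Matrix (Fin (1 * a + 1) × Fin (a * b))
                (Fin (1 * a + 1) × Fin (a * b)) ℝ)
              + (ltil : ℝ) • Mjoin a b 1 A
              + (mtil : ℝ) • (Jbig (1 * a + 1) (a * b) - 1 - Mjoin a b 1 A))
    (hlttil : ltil < ttil) (htktil : ttil < ktil) (hm0til : 0 < mtil) (hmttil : mtil ≤ ttil) :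
    ∀ i : ℕ, i < a →
      Ublk a b i * A = ((l : ℝ) + (b : ℝ) - (k : ℝ)) • Ublk a b i
        + (m : ℝ) • (onesMat (a * b) - Ublk a b i) := by
  have hn : 0 < a*b := Nat.mul_pos ha hb
  set M := Mjoin a b 1 A with hM
  -- row sums of A
  have hrow : ∀ r : Fin (a*b), (∑ s, A r s) = (k:ℝ) := by
    intro r
    have h := congrFun (congrFun hAJ r) r
    simpa [Matrix.mul_apply, onesMat] using h
  -- entrywise version of hA2
  have hA2e : ∀ r c : Fin (a*b), (∑ s, A r s * A s c)
      = (t:ℝ) * (if r = c then 1 else 0) + (l:ℝ) * A r c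
        + (m:ℝ) * (1 - (if r = c then 1 else 0) - A r c) := by
    intro r c
    have h := congrFun (congrFun hA2 r) c
    simpa [Matrix.mul_apply, onesMat, Matrix.one_apply] using h
  -- entrywise version of hM2
  have hM2e : ∀ (p q : Fin (1*a+1)) (r c : Fin (a*b)),
      (∑ e : Fin (1*a+1), ∑ s : Fin (a*b), M (p,r) (e,s) * M (e,s) (q,c))
      = (ttil:ℝ) * (if p = q ∧ r = c then 1 else 0) + (ltil:ℝ) * M (p,r) (q,c)
        + (mtil:ℝ) * (1 - (if p = q ∧ r = c then 1 else 0) - M (p,r) (q,c)) := by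
    intro p q r c
    have h := congrFun (congrFun hM2 (p,r)) (q,c)
    rw [Matrix.mul_apply, Fintype.sum_prod_type] at h
    simpa [Jbig, Matrix.one_apply, Prod.ext_iff] using h
  -- entry of M*M in the (0,0) block
  have offset0 : ∀ r c : Fin (a*b),
      (∑ e : Fin (1*a+1), ∑ s : Fin (a*b), M (0,r) (e,s) * M (e,s) ((0 : Fin (1*a+1)),c))
      = (∑ s, A r s * A s c) + (b:ℝ) := by
    intro r c
    rw [Fin.sum_univ_succ]
    have h0 : (∑ s : Fin (a*b), M ((0:Fin (1*a+1)),r) ((0:Fin (1*a+1)),s)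
        * M ((0:Fin (1*a+1)),s) ((0:Fin (1*a+1)),c)) = ∑ s, A r s * A s c := by
      apply Finset.sum_congr rfl
      intro s _
      rw [hM, Mjoin_app, Mjoin_app]
      simp
    rw [h0]
    congr 1
    have hrest : ∀ e' : Fin (1*a),
        (∑ s : Fin (a*b), M ((0:Fin (1*a+1)),r) (e'.succ, s) * M (e'.succ, s) ((0:Fin (1*a+1)),c))
        = (b:ℝ) * (if (c:ℕ)/b = 1*a - 1 - (e':ℕ) then 1 else 0) := by
      intro e'
      have hv : (e':ℕ) < 1*a := e'.isLt
      have hne0 : (e'.succ : Fin (1*a+1)) ≠ (0 : Fin (1*a+1)) := by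
        intro h; have := congrArg Fin.val h; simp [Fin.val_succ] at this
      have hsub1 : ((e'.succ - (0:Fin (1*a+1)) : Fin (1*a+1)) : ℕ) - 1 = (e':ℕ) := by
        rw [sub_zero, Fin.val_succ]
        omega
      have hsub2 : (((0:Fin (1*a+1)) - e'.succ : Fin (1*a+1)) : ℕ) - 1 = 1*a - 1 - (e':ℕ) := by
        rw [Fin.sub_def]
        simp only [Fin.val_succ, Fin.val_zero, add_zero]
        rw [show (1*a+1) - ((e':ℕ)+1) = 1*a - (e':ℕ) from by omega,
          Nat.mod_eq_of_lt (by omega)]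
        omega
      have hterm : ∀ s : Fin (a*b),
          M ((0:Fin (1*a+1)),r) (e'.succ, s) * M (e'.succ, s) ((0:Fin (1*a+1)),c)
          = (if (s:ℕ)/b = (e':ℕ) then (1:ℝ) else 0)
            * (if (c:ℕ)/b = 1*a - 1 - (e':ℕ) then (1:ℝ) else 0) := by
        intro s
        rw [hM, Mjoin_app, Mjoin_app]
        rw [if_neg hne0]
        rw [if_neg (show ¬((0:Fin (1*a+1)) = e'.succ) from fun h => hne0 h.symm)]
        rw [hsub1, hsub2]
      rw [Finset.sum_congr rfl (fun s _ => hterm s), ← Finset.sum_mul,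
        cellcard hb (show (e':ℕ) < a from by omega)]
    rw [Finset.sum_congr rfl (fun e' _ => hrest e')]
    have hcb : (c:ℕ)/b < a := cell_lt hb c
    have hkey1 : ∀ x : ℕ, x < a → (1*a - 1 - x < 1*a ∧ x = 1*a - 1 - (1*a - 1 - x)) := by
      intro x hx; omega
    have hkey2 : ∀ x e'' : ℕ, x < a → e'' < 1*a → e'' ≠ 1*a - 1 - x → ¬(x = 1*a - 1 - e'') := by
      intro x e'' h1 h2 h3 h4; omega
    rw [Fin.sum_univ_eq_sum_range (fun v : ℕ => (b:ℝ) * (if (c:ℕ)/b = 1*a - 1 - v then 1 else 0))]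
    have hsum := Finset.sum_eq_single (s := Finset.range (1*a))
      (f := fun v : ℕ => (b:ℝ) * (if (c:ℕ)/b = 1*a - 1 - v then 1 else 0))
      (1*a - 1 - (c:ℕ)/b)
      (fun e'' he'' hne => by
        rw [Finset.mem_range] at he''
        show (↑b * if (c:ℕ)/b = 1*a - 1 - e'' then (1:ℝ) else 0) = 0
        rw [if_neg (hkey2 _ _ hcb he'' hne), mul_zero])
      (fun h => absurd (Finset.mem_range.mpr (hkey1 _ hcb).1) h)
    rw [hsum]
    show (↑b * if (c:ℕ)/b = 1*a - 1 - (1*a - 1 - (c:ℕ)/b) then (1:ℝ) else 0) = ↑b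
    rw [if_pos (hkey1 _ hcb).2, mul_one]
  -- existence of an off-diagonal 1 entry
  have hApair : ∀ r c : Fin (a*b), r ≠ c →
      (l:ℝ) * A r c + (m:ℝ) * (1 - A r c) + (b:ℝ)
        = (ltil:ℝ) * A r c + (mtil:ℝ) * (1 - A r c) := by
    intro r c hrc
    have e1 := (offset0 r c).symm.trans (hM2e 0 0 r c)
    have h2 := hA2e r c
    rw [if_neg hrc] at h2
    rw [if_neg (by simp [hrc] : ¬((0:Fin (1*a+1)) = 0 ∧ r = c))] at e1
    rw [hM, Mjoin_app, if_pos rfl] at e1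
    rw [h2] at e1
    linarith
  have r0 : Fin (a*b) := ⟨0, hn⟩
  have hk2 : 2 ≤ k := by omega
  have hex1 : ∃ r c : Fin (a*b), r ≠ c ∧ A r c = 1 := by
    by_contra hcon
    push_neg at hcon
    have : (∑ s, A r0 s) = 0 := by
      apply Finset.sum_eq_zero
      intro s _
      by_cases hs : r0 = s
      · rw [← hs]; exact hdiag r0
      · rcases h01 r0 s with h | h
        · exact h
        · exact absurd h (hcon r0 s hs)
    rw [hrow r0] at this
    have : k = 0 := by exact_mod_cast this
    omega
  have hex0 : ∃ r c : Fin (a*b), r ≠ c ∧ A r c = 0 := by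
    by_contra hcon
    push_neg at hcon
    have hall : ∀ r c : Fin (a*b), A r c = if r = c then 0 else 1 := by
      intro r c
      by_cases hrc : r = c
      · rw [if_pos hrc, hrc]; exact hdiag c
      · rw [if_neg hrc]
        rcases h01 r c with h | h
        · exact absurd h (hcon r c hrc)
        · exact h
    have hsum : (∑ s, A r0 s) = (a*b : ℝ) - 1 := by
      rw [Finset.sum_congr rfl (fun s _ => hall r0 s)]
      have : ∀ s : Fin (a*b), (if r0 = s then (0:ℝ) else 1) = 1 - (if s = r0 then 1 else 0) := by
        intro s
        by_cases hs : s = r0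
        · rw [if_pos hs, if_pos hs.symm]; norm_num
        · rw [if_neg hs, if_neg (fun h => hs h.symm)]; norm_num
      rw [Finset.sum_congr rfl (fun s _ => this s), Finset.sum_sub_distrib,
        Finset.sum_ite_eq' Finset.univ r0 (fun _ => (1:ℝ)), if_pos (Finset.mem_univ _)]
      simp
    have hdiag2 : (∑ s, A r0 s * A s r0) = (a*b:ℝ) - 1 := by
      have : ∀ s : Fin (a*b), A r0 s * A s r0 = A r0 s := by
        intro s
        by_cases hs : r0 = s
        · rw [← hs, hdiag r0]; ring
        · rw [hall s r0, if_neg (fun h => hs h.symm), mul_one]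
      rw [Finset.sum_congr rfl (fun s _ => this s), hsum]
    have h2 := hA2e r0 r0
    rw [if_pos rfl, hdiag r0, hdiag2] at h2
    have hkr : (k:ℝ) = (a*b:ℝ) - 1 := by rw [← hrow r0, hsum]
    have : (t:ℝ) = (k:ℝ) := by rw [hkr]; linarith
    have : t = k := by exact_mod_cast this
    omega
  obtain ⟨r1, c1, hne1, h1⟩ := hex1
  obtain ⟨r2, c2, hne2, h2⟩ := hex0
  have hltil : (ltil:ℝ) = (l:ℝ) + b := by
    have := hApair r1 c1 hne1
    rw [h1] at this
    linarith
  have hmtil : (mtil:ℝ) = (m:ℝ) + b := by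
    have := hApair r2 c2 hne2
    rw [h2] at this
    linarith
  -- now the offset-d computation
  intro i hi
  have hiN : i + 1 < 1*a + 1 := by omega
  set d : Fin (1*a+1) := ⟨i+1, hiN⟩ with hd
  have hdval : (d:ℕ) = i + 1 := rfl
  have hdne0 : d ≠ (0 : Fin (1*a+1)) := by
    intro h
    have := congrArg Fin.val h
    rw [hdval] at this
    simp at this
  have hsubd0 : ((d - (0:Fin (1*a+1)) : Fin (1*a+1)) : ℕ) - 1 = i := by
    rw [sub_zero, hdval]
    omega
  have i0lt : i < 1*a := by omega
  set i0 : Fin (1*a) := ⟨i, i0lt⟩ with hi0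
  have hds : d = i0.succ := rfl
  have offsetd : ∀ r c : Fin (a*b),
      (∑ e : Fin (1*a+1), ∑ s : Fin (a*b), M (0,r) (e,s) * M (e,s) (d,c))
      = (k:ℝ) * (if (c:ℕ)/b = i then 1 else 0)
        + (∑ s : Fin (a*b), (if (s:ℕ)/b = i then (1:ℝ) else 0) * A s c)
        + (b:ℝ) * (1 - (if (c:ℕ)/b = i then 1 else 0)) := by
    intro r c
    have hcb : (c:ℕ)/b < a := cell_lt hb c
    rw [Fin.sum_univ_succ]
    have h0 : (∑ s : Fin (a*b), M ((0:Fin (1*a+1)),r) ((0:Fin (1*a+1)),s)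
        * M ((0:Fin (1*a+1)),s) (d,c))
        = (k:ℝ) * (if (c:ℕ)/b = i then 1 else 0) := by
      have hterm : ∀ s : Fin (a*b), M ((0:Fin (1*a+1)),r) ((0:Fin (1*a+1)),s)
          * M ((0:Fin (1*a+1)),s) (d,c)
          = A r s * (if (c:ℕ)/b = i then (1:ℝ) else 0) := by
        intro s
        rw [hM, Mjoin_app, Mjoin_app, if_pos rfl, if_neg hdne0, hsubd0]
      rw [Finset.sum_congr rfl (fun s _ => hterm s), ← Finset.sum_mul, hrow]
    rw [h0]
    -- split off the e' = i0 term
    rw [← Finset.add_sum_erase _ _ (Finset.mem_univ i0)]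
    have hrest0 : (∑ s : Fin (a*b), M ((0:Fin (1*a+1)),r) (i0.succ, s) * M (i0.succ, s) (d,c))
        = ∑ s : Fin (a*b), (if (s:ℕ)/b = i then (1:ℝ) else 0) * A s c := by
      have hne0 : (i0.succ : Fin (1*a+1)) ≠ 0 := by rw [← hds]; exact hdne0
      have hsucc0 : ((i0.succ - (0:Fin (1*a+1)) : Fin (1*a+1)) : ℕ) - 1 = i := by
        rw [← hds]; exact hsubd0
      have hterm : ∀ s : Fin (a*b),
          M ((0:Fin (1*a+1)),r) (i0.succ, s) * M (i0.succ, s) (d,c)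
          = (if (s:ℕ)/b = i then (1:ℝ) else 0) * A s c := by
        intro s
        rw [hM, Mjoin_app, Mjoin_app, if_neg hne0, if_pos hds, hsucc0]
      exact Finset.sum_congr rfl (fun s _ => hterm s)
    rw [hrest0]
    -- the remaining terms
    have hinner : ∀ e' : Fin (1*a), (e':ℕ) ≠ i →
        (∑ s : Fin (a*b), M ((0:Fin (1*a+1)),r) (e'.succ, s) * M (e'.succ, s) (d,c))
        = (b:ℝ) * (if (c:ℕ)/b = (if (e':ℕ) < i then i - (e':ℕ) - 1 else 1*a + i - (e':ℕ))
            then 1 else 0) := by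
      intro e' hvne
      have hv : (e':ℕ) < 1*a := e'.isLt
      have hne0 : (e'.succ : Fin (1*a+1)) ≠ 0 := by
        intro h; have := congrArg Fin.val h; simp [Fin.val_succ] at this
      have hdnes : d ≠ e'.succ := by
        intro h
        have := congrArg Fin.val h
        rw [hdval, Fin.val_succ] at this
        omega
      have hsub1' : ((e'.succ - (0:Fin (1*a+1)) : Fin (1*a+1)) : ℕ) - 1 = (e':ℕ) := by
        rw [sub_zero, Fin.val_succ]
        omega
      have hsub : ((d - e'.succ : Fin (1*a+1)) : ℕ) - 1
          = (if (e':ℕ) < i then i - (e':ℕ) - 1 else 1*a + i - (e':ℕ)) := by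
        rw [Fin.sub_def]
        simp only [Fin.val_succ, hdval]
        by_cases hlt' : (e':ℕ) < i
        · rw [if_pos hlt',
            show (1*a+1) - ((e':ℕ)+1) + (i+1) = (1*a+1) + (i - (e':ℕ)) from by omega,
            Nat.add_mod_left, Nat.mod_eq_of_lt (by omega)]
        · rw [if_neg hlt',
            show (1*a+1) - ((e':ℕ)+1) + (i+1) = 1*a + 1 + i - (e':ℕ) from by omega,
            Nat.mod_eq_of_lt (by omega)]
          omega
      have hterm : ∀ s : Fin (a*b),
          M ((0:Fin (1*a+1)),r) (e'.succ, s) * M (e'.succ, s) (d,c)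
          = (if (s:ℕ)/b = (e':ℕ) then (1:ℝ) else 0)
            * (if (c:ℕ)/b = (if (e':ℕ) < i then i - (e':ℕ) - 1 else 1*a + i - (e':ℕ))
                then (1:ℝ) else 0) := by
        intro s
        rw [hM, Mjoin_app, Mjoin_app, if_neg hne0, if_neg hdnes, hsub1', hsub]
      rw [Finset.sum_congr rfl (fun s _ => hterm s), ← Finset.sum_mul,
        cellcard hb (show (e':ℕ) < a from by omega)]
    by_cases hcc : (c:ℕ)/b = i
    · have hz : ∀ e' ∈ Finset.univ.erase i0,
          (∑ s : Fin (a*b), M ((0:Fin (1*a+1)),r) (e'.succ, s) * M (e'.succ, s) (d,c)) = 0 := by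
        intro e' he'
        have hvne : (e':ℕ) ≠ i := by
          intro h
          exact (Finset.ne_of_mem_erase he') (Fin.ext h)
        rw [hinner e' hvne, if_neg, mul_zero]
        rw [hcc]
        have hv : (e':ℕ) < 1*a := e'.isLt
        by_cases hlt' : (e':ℕ) < i
        · rw [if_pos hlt']; omega
        · rw [if_neg hlt']; omega
      rw [Finset.sum_eq_zero hz, if_pos hcc]
      ring
    · obtain ⟨x, hx⟩ : ∃ x : ℕ, (c:ℕ)/b = x := ⟨_, rfl⟩
      rw [hx] at hcc hcb
      rw [hx] at hinner ⊢
      have hwex : ∃ w : ℕ, w < 1*a ∧ w ≠ i ∧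
          (if w < i then i - w - 1 else 1*a + i - w) = x ∧
          ∀ v : ℕ, v < 1*a → v ≠ i → v ≠ w →
            (if v < i then i - v - 1 else 1*a + i - v) ≠ x := by
        by_cases h1 : x < i
        · refine ⟨i - 1 - x, by omega, by omega, by rw [if_pos (by omega)]; omega, ?_⟩
          intro v hv1 hv2 hv3
          by_cases h2 : v < i
          · rw [if_pos h2]; omega
          · rw [if_neg h2]; omega
        · refine ⟨1*a + i - x, by omega, by omega, by rw [if_neg (by omega)]; omega, ?_⟩
          intro v hv1 hv2 hv3
          by_cases h2 : v < i
          · rw [if_pos h2]; omega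
          · rw [if_neg h2]; omega
      obtain ⟨w, hw1, hw2, hw3, hw4⟩ := hwex
      have hsum2 : (∑ e' ∈ Finset.univ.erase i0,
          (∑ s : Fin (a*b), M ((0:Fin (1*a+1)),r) (e'.succ, s) * M (e'.succ, s) (d,c)))
          = (b:ℝ) := by
        rw [Finset.sum_eq_single (⟨w, hw1⟩ : Fin (1*a))]
        · rw [hinner _ (show (((⟨w, hw1⟩ : Fin (1*a)):ℕ)) ≠ i from hw2)]
          rw [show (if (((⟨w, hw1⟩ : Fin (1*a)):ℕ)) < i
              then i - (((⟨w, hw1⟩ : Fin (1*a)):ℕ)) - 1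
              else 1*a + i - (((⟨w, hw1⟩ : Fin (1*a)):ℕ))) = x from hw3]
          rw [if_pos rfl, mul_one]
        · intro e'' he'' hne''
          have hvne : (e'':ℕ) ≠ i := by
            intro h
            exact (Finset.ne_of_mem_erase he'') (Fin.ext h)
          have hvnw : (e'':ℕ) ≠ w := by
            intro h
            exact hne'' (Fin.ext h)
          rw [hinner e'' hvne, if_neg (fun hh => hw4 _ e''.isLt hvne hvnw hh.symm), mul_zero]
        · intro habs
          exact absurd (Finset.mem_erase.mpr
            ⟨fun h => hw2 (congrArg Fin.val h), Finset.mem_univ _⟩) habs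
      rw [hsum2, if_neg hcc]
      ring
  -- final assembly
  ext r c
  have he := (offsetd r c).symm.trans (hM2e 0 d r c)
  have hne0d : ¬(((0:Fin (1*a+1)) = d) ∧ r = c) := by
    rintro ⟨h1, -⟩
    have := congrArg Fin.val h1
    rw [hdval] at this
    simp at this
  rw [if_neg hne0d, mul_zero] at he
  rw [hM, Mjoin_app, if_neg hdne0, hsubd0] at he
  rw [Matrix.mul_apply]
  simp only [Matrix.add_apply, Matrix.smul_apply, Matrix.sub_apply, smul_eq_mul,
    onesMat, Ublk, Matrix.of_apply]
  by_cases hcc : (c:ℕ)/b = i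
  · rw [if_pos hcc] at he ⊢
    linarith
  · rw [if_neg hcc] at he ⊢
    linarith
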